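/- Imprimitive factorisation of the Rankin–Selberg L-function of f with itself: For every s ∈ ℂ with Re(s) > 2k+3, all three Dirichlet series below converge absolutely and ∑_{n≥1} a(n)²·n^{−s} = (∑_{n≥1} a(n²)·n^{−s}) · (∑_{n≥1} ψ(n)·n^{k+1−s}). Equivalently, setting L(f,f,s) = L_{(N)}(ψ², 2s−2−2k)·∑_{n≥1} a(n)² n^{−s} and L^{imp}(Sym² f, s) = L_{(N)}(ψ², 2s−2k−2)·∑_{n≥1} a(n²) n^{−s}, one has L(f,f,s) = L^{imp}(Sym² f, s) · L_{(N)}(ψ, s−k−1) in this region, where L_{(N)}(ψ, w) = ∑_{n≥1, gcd(n,N)=1} ψ(n)·n^{−w}. -/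
import Mathlib


/-!
Imprimitive factorisation of the Rankin–Selberg L-function of `f` with itself:
for `Re(s) > 2k+3` the three Dirichlet series converge absolutely and
`∑ a(n)² n^{-s} = (∑ a(n²) n^{-s}) · (∑ ψ(n) n^{k+1-s})`; equivalently,
`L(f,f,s) = L^{imp}(Sym² f, s) · L_{(N)}(ψ, s-k-1)` in this region.
-/

open Complex Finset LSeries


lemma RS_aux1 (t c : ℂ) (b : ℕ → ℂ) (hb0 : b 0 = 1) (hb1 : b 1 = t)
    (hrec : ∀ r, b (r + 2) = t * b (r + 1) - c * b r) :
    ∀ m n : ℕ, b (m + n + 2) = b (m + 1) * b (n + 1) - c * (b m * b n) := by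
  intro m
  induction m with
  | zero =>
    intro n
    simp only [Nat.zero_add]
    rw [hrec n, hb0, hb1]; ring
  | succ m ih =>
    intro n
    have e1 : m + 1 + n + 2 = m + (n + 1) + 2 := by omega
    have e2 : n + 1 + 1 = n + 2 := by omega
    have e3 : m + 1 + 1 = m + 2 := by omega
    rw [e1, ih (n + 1), e2, hrec n, e3, hrec m]; ring

lemma RS_aux2 (t c : ℂ) (b : ℕ → ℂ) (hb0 : b 0 = 1) (hb1 : b 1 = t)
    (hrec : ∀ r, b (r + 2) = t * b (r + 1) - c * b r) (i : ℕ) :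
    b (2 * (i + 1)) = b (i + 1) ^ 2 - c * b i ^ 2 := by
  have e : 2 * (i + 1) = i + i + 2 := by omega
  rw [e, RS_aux1 t c b hb0 hb1 hrec i i]; ring

lemma RS_aux3 (t c : ℂ) (b : ℕ → ℂ) (hb0 : b 0 = 1) (hb1 : b 1 = t)
    (hrec : ∀ r, b (r + 2) = t * b (r + 1) - c * b r) :
    ∀ i : ℕ, b i ^ 2 = ∑ j ∈ Finset.range (i + 1), b (2 * j) * c ^ (i - j) := by
  intro i
  induction i with
  | zero => simp [hb0]
  | succ i ih =>
    rw [Finset.sum_range_succ]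
    have hsum : ∑ j ∈ Finset.range (i + 1), b (2 * j) * c ^ (i + 1 - j)
        = c * ∑ j ∈ Finset.range (i + 1), b (2 * j) * c ^ (i - j) := by
      rw [Finset.mul_sum]
      refine Finset.sum_congr rfl fun j hj => ?_
      have : i + 1 - j = (i - j) + 1 := by
        have := Finset.mem_range.mp hj; omega
      rw [this, pow_succ]; ring
    rw [hsum, ← ih, Nat.sub_self, pow_zero, mul_one, RS_aux2 t c b hb0 hb1 hrec i]
    ring

theorem imprimitive_rankin_selberg_factorisation
    (N : ℕ) (k : ℕ) (ψ : DirichletCharacter ℂ N) (a : ℕ → ℂ)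
    (h0 : a 0 = 0) (h1 : a 1 = 1)
    (hmul : ∀ m n : ℕ, Nat.Coprime m n → a (m * n) = a m * a n)
    (hgood : ∀ (l : ℕ), l.Prime → ¬ l ∣ N → ∀ r : ℕ,
      a (l ^ (r + 2)) = a l * a (l ^ (r + 1)) - ψ (l : ZMod N) * (l : ℂ) ^ (k + 1) * a (l ^ r))
    (hbad : ∀ (l : ℕ), l.Prime → l ∣ N → ∀ r : ℕ,
      a (l ^ (r + 1)) = a l * a (l ^ r))
    (hbound : ∀ n : ℕ, 1 ≤ n → ‖a n‖ ≤ (n : ℝ) ^ (k + 1))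
    (s : ℂ) (hs : (2 * k + 3 : ℝ) < s.re) :
    (Summable fun n : ℕ => ‖a n ^ 2 * (n : ℂ) ^ (-s)‖) ∧
    (Summable fun n : ℕ => ‖a (n ^ 2) * (n : ℂ) ^ (-s)‖) ∧
    (Summable fun n : ℕ => ‖ψ (n : ZMod N) * (n : ℂ) ^ ((k : ℂ) + 1 - s)‖) ∧
    (∑' n : ℕ, a n ^ 2 * (n : ℂ) ^ (-s)) =
      (∑' n : ℕ, a (n ^ 2) * (n : ℂ) ^ (-s)) *
        (∑' n : ℕ, ψ (n : ZMod N) * (n : ℂ) ^ ((k : ℂ) + 1 - s)) ∧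
    -- Equivalently, with `L_{(N)}(ψ, w) = ∑_{gcd(n,N)=1} ψ(n)·n^{−w}`:
    -- `L(f,f,s) = L^{imp}(Sym² f, s) · L_{(N)}(ψ, s−k−1)`.
    (∑' n : ℕ, (if Nat.Coprime n N then (ψ (n : ZMod N)) ^ 2 * (n : ℂ) ^ (-(2 * s - 2 - 2 * (k : ℂ))) else 0)) *
        (∑' n : ℕ, a n ^ 2 * (n : ℂ) ^ (-s)) =
      ((∑' n : ℕ, (if Nat.Coprime n N then (ψ (n : ZMod N)) ^ 2 * (n : ℂ) ^ (-(2 * s - 2 * (k : ℂ) - 2)) else 0)) *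
          (∑' n : ℕ, a (n ^ 2) * (n : ℂ) ^ (-s))) *
        (∑' n : ℕ, (if Nat.Coprime n N then ψ (n : ZMod N) * (n : ℂ) ^ (-(s - (k : ℂ) - 1)) else 0)) := by
  -- the three arithmetic functions
  set F : ArithmeticFunction ℂ := ⟨fun n => a n ^ 2, by simp [h0]⟩ with hFdef
  set G : ArithmeticFunction ℂ := ⟨fun n => a (n ^ 2), by simp [h0]⟩ with hGdef
  set H : ArithmeticFunction ℂ := ⟨fun n => ψ (n : ZMod N) * (n : ℂ) ^ (k + 1), by simp⟩ with hHdef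
  have hFa : ∀ n, F n = a n ^ 2 := fun n => rfl
  have hGa : ∀ n, G n = a (n ^ 2) := fun n => rfl
  have hHa : ∀ n, H n = ψ (n : ZMod N) * (n : ℂ) ^ (k + 1) := fun n => rfl
  have hFm : F.IsMultiplicative := by
    refine ⟨by simp [hFa, h1], fun {m n} h => ?_⟩
    simp only [hFa, hmul m n h]; ring
  have hGm : G.IsMultiplicative := by
    refine ⟨by simp [hGa, h1], fun {m n} h => ?_⟩
    simp only [hGa, mul_pow]
    exact hmul _ _ (Nat.Coprime.pow _ _ h)
  have hHm : H.IsMultiplicative := by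
    refine ⟨by simp [hHa], fun {m n} h => ?_⟩
    simp only [hHa]
    push_cast
    rw [map_mul]
    ring
  -- a at bad prime powers
  have hbadpow : ∀ p : ℕ, p.Prime → p ∣ N → ∀ r : ℕ, a (p ^ r) = a p ^ r := by
    intro p hp hpN r
    induction r with
    | zero => simpa using h1
    | succ r ih => rw [hbad p hp hpN r, ih, pow_succ]; ring
  -- F = G * H
  have hFGH : F = G * H := by
    rw [ArithmeticFunction.IsMultiplicative.eq_iff_eq_on_prime_powers F hFm (G * H) (hGm.mul hHm)]
    intro p i hp
    have hconv : (G * H) (p ^ i)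
        = ∑ j ∈ Finset.range (i + 1),
            a ((p ^ j) ^ 2) * (ψ ((p ^ (i - j) : ℕ) : ZMod N) * ((p ^ (i - j) : ℕ) : ℂ) ^ (k + 1)) := by
      rw [ArithmeticFunction.mul_apply,
        Nat.sum_divisorsAntidiagonal (f := fun x y => G x * H y),
        Nat.sum_divisors_prime_pow hp]
      refine Finset.sum_congr rfl fun j hj => ?_
      have hji : j ≤ i := by have := Finset.mem_range.mp hj; omega
      rw [Nat.pow_div hji hp.pos, hGa, hHa]
    rw [hconv, hFa]
    by_cases hpN : p ∣ N
    · -- bad prime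
      have hψp : ψ ((p : ℕ) : ZMod N) = 0 := by
        apply ψ.map_nonunit
        rw [ZMod.isUnit_prime_iff_not_dvd hp]
        simpa using hpN
      rw [Finset.sum_eq_single i]
      · have e : (p ^ i) ^ 2 = p ^ (2 * i) := by rw [← pow_mul]; ring_nf
        rw [Nat.sub_self, e, hbadpow p hp hpN i, hbadpow p hp hpN (2 * i), two_mul, pow_add, ← sq]
        simp
      · intro j hj hji
        have hij : 0 < i - j := by have := Finset.mem_range.mp hj; omega
        have : ψ ((p ^ (i - j) : ℕ) : ZMod N) = 0 := by
          push_cast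
          rw [map_pow, hψp, zero_pow (by omega)]
        rw [this, zero_mul, mul_zero]
      · intro h; exact absurd (Finset.self_mem_range_succ i) h
    · -- good prime
      set c : ℂ := ψ ((p : ℕ) : ZMod N) * (p : ℂ) ^ (k + 1) with hc
      have hterm : ∀ j ∈ Finset.range (i + 1),
          a ((p ^ j) ^ 2) * (ψ ((p ^ (i - j) : ℕ) : ZMod N) * ((p ^ (i - j) : ℕ) : ℂ) ^ (k + 1))
            = a (p ^ (2 * j)) * c ^ (i - j) := by
        intro j hj
        have e : (p ^ j) ^ 2 = p ^ (2 * j) := by rw [← pow_mul]; ring_nf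
        rw [e]
        congr 1
        push_cast
        rw [map_pow, hc, mul_pow, ← pow_mul, ← pow_mul, Nat.mul_comm]
      rw [Finset.sum_congr rfl hterm]
      exact RS_aux3 (a p) c (fun r => a (p ^ r)) (by simpa using h1) (by show a (p ^ 1) = a p; rw [pow_one])
        (fun r => hgood p hp hpN r) i
  -- exponent `k+1-s` is nonzero
  have hks : ((k : ℂ) + 1 - s) ≠ 0 := by
    intro h
    have := congrArg Complex.re h
    simp only [sub_re, add_re, natCast_re, one_re, zero_re] at this
    have hk : (0:ℝ) ≤ (k:ℝ) := by positivity
    linarith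
  -- identification with LSeries terms
  have htermF : (fun n : ℕ => a n ^ 2 * (n : ℂ) ^ (-s)) = term (⇑F) s := by
    funext n
    rcases eq_or_ne n 0 with rfl | hn
    · simp [LSeries.term_zero, h0]
    · rw [LSeries.term_of_ne_zero hn, hFa, cpow_neg, div_eq_mul_inv]
  have htermG : (fun n : ℕ => a (n ^ 2) * (n : ℂ) ^ (-s)) = term (⇑G) s := by
    funext n
    rcases eq_or_ne n 0 with rfl | hn
    · simp [LSeries.term_zero, h0]
    · rw [LSeries.term_of_ne_zero hn, hGa, cpow_neg, div_eq_mul_inv]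
  have htermH : (fun n : ℕ => ψ (n : ZMod N) * (n : ℂ) ^ ((k : ℂ) + 1 - s)) = term (⇑H) s := by
    funext n
    rcases eq_or_ne n 0 with rfl | hn
    · simp [LSeries.term_zero, zero_cpow hks]
    · rw [LSeries.term_of_ne_zero hn, hHa]
      have hn0 : (n : ℂ) ≠ 0 := by exact_mod_cast hn
      have he : ((k : ℂ) + 1) = ((k + 1 : ℕ) : ℂ) := by push_cast; ring
      rw [sub_eq_add_neg, cpow_add _ _ hn0, he, cpow_natCast, cpow_neg, div_eq_mul_inv]
      ring
  -- summability
  have hsx : (2 * (k:ℝ) + 3) < s.re := by exact_mod_cast hs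
  have hexpcast : ∀ n : ℕ, n ≠ 0 → ((n:ℝ) ^ (2 * (k:ℝ) + 3 - 1)) = (n:ℝ) ^ (2 * k + 2 : ℕ) := by
    intro n hn
    rw [← Real.rpow_natCast (n:ℝ) (2 * k + 2)]
    congr 1
    push_cast; ring
  have hFsum : LSeriesSummable (⇑F) s := by
    refine LSeriesSummable_of_le_const_mul_rpow hsx ⟨1, fun n hn => ?_⟩
    rw [one_mul, hexpcast n hn, hFa]
    calc ‖a n ^ 2‖ = ‖a n‖ ^ 2 := norm_pow _ 2
      _ ≤ ((n:ℝ) ^ (k + 1)) ^ 2 := by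
          have := hbound n (Nat.one_le_iff_ne_zero.mpr hn)
          exact pow_le_pow_left₀ (norm_nonneg _) this 2
      _ = (n:ℝ) ^ (2 * k + 2 : ℕ) := by rw [← pow_mul]; ring_nf
  have hGsum : LSeriesSummable (⇑G) s := by
    refine LSeriesSummable_of_le_const_mul_rpow hsx ⟨1, fun n hn => ?_⟩
    rw [one_mul, hexpcast n hn, hGa]
    calc ‖a (n ^ 2)‖ ≤ ((n ^ 2 : ℕ):ℝ) ^ (k + 1) :=
          hbound _ (Nat.one_le_iff_ne_zero.mpr (pow_ne_zero _ hn))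
      _ = (n:ℝ) ^ (2 * k + 2 : ℕ) := by push_cast; rw [← pow_mul]; ring_nf
  have hHsum : LSeriesSummable (⇑H) s := by
    refine LSeriesSummable_of_le_const_mul_rpow hsx ⟨1, fun n hn => ?_⟩
    rw [one_mul, hexpcast n hn, hHa]
    have h1n : (1:ℝ) ≤ (n:ℝ) := by exact_mod_cast Nat.one_le_iff_ne_zero.mpr hn
    calc ‖ψ (n : ZMod N) * (n : ℂ) ^ (k + 1)‖
        = ‖ψ (n : ZMod N)‖ * ‖(n : ℂ) ^ (k + 1)‖ := norm_mul _ _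
      _ ≤ 1 * ‖(n : ℂ) ^ (k + 1)‖ :=
          mul_le_mul_of_nonneg_right (ψ.norm_le_one _) (norm_nonneg _)
      _ = (n:ℝ) ^ (k + 1) := by simp
      _ ≤ (n:ℝ) ^ (2 * k + 2 : ℕ) := pow_le_pow_right₀ h1n (by omega)
  have S1 : Summable fun n : ℕ => ‖a n ^ 2 * (n : ℂ) ^ (-s)‖ := by
    refine Summable.congr hFsum.norm fun n => ?_
    exact (congrArg norm (congrFun htermF n)).symm
  have S2 : Summable fun n : ℕ => ‖a (n ^ 2) * (n : ℂ) ^ (-s)‖ := by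
    refine Summable.congr hGsum.norm fun n => ?_
    exact (congrArg norm (congrFun htermG n)).symm
  have S3 : Summable fun n : ℕ => ‖ψ (n : ZMod N) * (n : ℂ) ^ ((k : ℂ) + 1 - s)‖ := by
    refine Summable.congr hHsum.norm fun n => ?_
    exact (congrArg norm (congrFun htermH n)).symm
  -- product formula
  have eF : LSeries (⇑F) s = ∑' n : ℕ, a n ^ 2 * (n : ℂ) ^ (-s) := by
    unfold LSeries; exact tsum_congr fun n => (congrFun htermF n).symm
  have eG : LSeries (⇑G) s = ∑' n : ℕ, a (n ^ 2) * (n : ℂ) ^ (-s) := by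
    unfold LSeries; exact tsum_congr fun n => (congrFun htermG n).symm
  have eH : LSeries (⇑H) s = ∑' n : ℕ, ψ (n : ZMod N) * (n : ℂ) ^ ((k : ℂ) + 1 - s) := by
    unfold LSeries; exact tsum_congr fun n => (congrFun htermH n).symm
  have hmain0 := ArithmeticFunction.LSeries_mul' hGsum hHsum
  rw [← hFGH] at hmain0
  have hmain : (∑' n : ℕ, a n ^ 2 * (n : ℂ) ^ (-s)) =
      (∑' n : ℕ, a (n ^ 2) * (n : ℂ) ^ (-s)) *
        (∑' n : ℕ, ψ (n : ZMod N) * (n : ℂ) ^ ((k : ℂ) + 1 - s)) := by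
    rw [← eF, ← eG, ← eH]; exact hmain0
  refine ⟨S1, S2, S3, hmain, ?_⟩
  -- last statement
  have hB : (∑' n : ℕ, (if Nat.Coprime n N then ψ (n : ZMod N) * (n : ℂ) ^ (-(s - (k : ℂ) - 1)) else 0))
      = ∑' n : ℕ, ψ (n : ZMod N) * (n : ℂ) ^ ((k : ℂ) + 1 - s) := by
    refine tsum_congr fun n => ?_
    have hexp2 : -(s - (k : ℂ) - 1) = (k : ℂ) + 1 - s := by ring
    rw [hexp2]
    by_cases hc : Nat.Coprime n N
    · rw [if_pos hc]
    · rw [if_neg hc]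
      have hz : ψ ((n : ℕ) : ZMod N) = 0 := by
        apply ψ.map_nonunit
        rw [ZMod.isUnit_iff_coprime]
        exact hc
      rw [hz, zero_mul]
  have hexp1 : -(2 * s - 2 - 2 * (k : ℂ)) = -(2 * s - 2 * (k : ℂ) - 2) := by ring
  simp only [hexp1]
  rw [hB, hmain]
  ring
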